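/- Let u > v be positive integers with gcd(u,v)=1. For j ∈ {0,...,u−1} and k ∈ {0,...,u−1}, define A_j = { (jv+i) mod u : 0 ≤ i < v } and, whenever k ∈ A_j, set b(j,k) = u + ⌊(jv + ((k − jv) mod u))/u⌋. Then for any j ≠ j' in {0,...,u−1} and any k ∈ A_j ∩ A_{j'}, we have b(j,k) ≠ b(j',k). -/
import Mathlib

theorem b_injective_on_column (u v : ℕ) (hv : 0 < v) (huv : v < u)
    (hgcd : Nat.gcd u v = 1) (j j' k : ℕ) (hj : j < u) (hj' : j' < u) (hne : j ≠ j')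
    (hkj : k ∈ (Finset.range v).image (fun i => (j * v + i) % u))
    (hkj' : k ∈ (Finset.range v).image (fun i => (j' * v + i) % u)) :
    (u : ℤ) + (((j : ℤ) * v) + (((k : ℤ) - (j : ℤ) * v) % (u : ℤ))) / (u : ℤ) ≠
      (u : ℤ) + (((j' : ℤ) * v) + (((k : ℤ) - (j' : ℤ) * v) % (u : ℤ))) / (u : ℤ) := by
  obtain ⟨i, hi, hki⟩ := Finset.mem_image.mp hkj
  obtain ⟨i', hi', hki'⟩ := Finset.mem_image.mp hkj'
  rw [Finset.mem_range] at hi hi'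
  have hu0 : (0:ℤ) < u := by exact_mod_cast hv.trans huv
  have hk : (k:ℤ) = ((j:ℤ)*v + i) % u := by exact_mod_cast hki.symm
  have hk' : (k:ℤ) = ((j':ℤ)*v + i') % u := by exact_mod_cast hki'.symm
  have hr : ((k:ℤ) - (j:ℤ)*v) % u = (i:ℤ) := by
    rw [hk, Int.sub_emod, Int.emod_emod_of_dvd _ dvd_rfl, ← Int.sub_emod,
      add_sub_cancel_left, Int.emod_eq_of_lt (by positivity) (by exact_mod_cast hi.trans huv)]
  have hr' : ((k:ℤ) - (j':ℤ)*v) % u = (i':ℤ) := by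
    rw [hk', Int.sub_emod, Int.emod_emod_of_dvd _ dvd_rfl, ← Int.sub_emod,
      add_sub_cancel_left, Int.emod_eq_of_lt (by positivity) (by exact_mod_cast hi'.trans huv)]
  intro heq
  rw [hr, hr', add_right_inj] at heq
  have hx : (j:ℤ)*v + i = (j':ℤ)*v + i' := by
    have e1 := Int.mul_ediv_add_emod ((j:ℤ)*v + i) u
    have e2 := Int.mul_ediv_add_emod ((j':ℤ)*v + i') u
    rw [← hk] at e1
    rw [← hk'] at e2
    rw [heq] at e1
    omega
  have hiv : (i:ℤ) < v := by exact_mod_cast hi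
  have hiv' : (i':ℤ) < v := by exact_mod_cast hi'
  have hi0 : (0:ℤ) ≤ i := by positivity
  have hi0' : (0:ℤ) ≤ i' := by positivity
  have hv0 : (0:ℤ) < v := by exact_mod_cast hv
  rcases hne.lt_or_gt with h | h
  · have hm : ((j:ℤ)+1)*v ≤ (j':ℤ)*v := by
      apply mul_le_mul_of_nonneg_right _ hv0.le
      exact_mod_cast h
    nlinarith
  · have hm : ((j':ℤ)+1)*v ≤ (j:ℤ)*v := by
      apply mul_le_mul_of_nonneg_right _ hv0.le
      exact_mod_cast h
    nlinarith
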